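/- Let B ⊂ ℝⁿ be a symmetric convex body (B = -B, convex, bounded, with nonempty interior), let Λ ⊂ ℝⁿ be a full-rank lattice, and let A = Λ ∩ B be finite and nonempty. Then |A + A| ≤ 5ⁿ · |A|, where A + A = {a₁ + a₂ : a₁, a₂ ∈ A} is the Minkowski sumset. -/

import Mathlib

open Pointwise MeasureTheory

/-- lattice points in a symmetric convex body have doubling at most 5^n. -/
theorem sumset_lattice_convex_body_le (n : ℕ)
    (B : Set (EuclideanSpace ℝ (Fin n)))
    (hBsym : B = -B) (hBconv : Convex ℝ B)
    (hBbdd : Bornology.IsBounded B) (hBint : (interior B).Nonempty)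
    (b : Fin n → EuclideanSpace ℝ (Fin n)) (hb : LinearIndependent ℝ b)
    (Λ : Set (EuclideanSpace ℝ (Fin n)))
    (hΛ : Λ = {x | ∃ a : Fin n → ℤ, x = ∑ i, (a i : ℝ) • b i})
    (A : Set (EuclideanSpace ℝ (Fin n))) (hA : A = Λ ∩ B)
    (hfin : A.Finite) (hne : A.Nonempty) :
    (A + A).ncard ≤ 5 ^ n * A.ncard := by
  classical
  set L : Submodule ℤ (EuclideanSpace ℝ (Fin n)) := Submodule.span ℤ (Set.range b) with hL
  -- Λ is the ℤ-span of b
  have hΛL : Λ = (L : Set (EuclideanSpace ℝ (Fin n))) := by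
    ext x
    rw [hΛ, Set.mem_setOf_eq, SetLike.mem_coe, hL, Submodule.mem_span_range_iff_exists_fun]
    constructor
    · rintro ⟨a, rfl⟩
      exact ⟨a, by simp [Int.cast_smul_eq_zsmul]⟩
    · rintro ⟨a, rfl⟩
      exact ⟨a, by simp [Int.cast_smul_eq_zsmul]⟩

  -- discreteness of the lattice
  haveI hdisc : DiscreteTopology L := by
    let bb : Module.Basis (Fin n) ℝ (EuclideanSpace ℝ (Fin n)) := Module.Basis.mk hb (by
      rw [hb.span_eq_top_of_card_eq_finrank' (by simp)])
    have e : Set.range bb = Set.range b := by rw [show ⇑bb = b from Module.Basis.coe_mk hb _]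
    rw [hL, ← e]; infer_instance
  have hclosed : IsClosed (Λ : Set (EuclideanSpace ℝ (Fin n))) := by
    rw [hΛL]
    haveI : DiscreteTopology L.toAddSubgroup := hdisc
    exact AddSubgroup.isClosed_of_discrete (H := L.toAddSubgroup)
  -- basic convexity facts
  have hneg1 : ∀ s : Set (EuclideanSpace ℝ (Fin n)), -s = (-1:ℝ) • s := by
    intro s; rw [Set.neg_smul_set, one_smul]
  have hintsym : interior B = -interior B := by
    conv_lhs => rw [hBsym, hneg1 B, interior_smul₀ (by norm_num : (-1:ℝ) ≠ 0) B]
    rw [← hneg1]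
  have h0B : (0 : (EuclideanSpace ℝ (Fin n))) ∈ interior B := by
    obtain ⟨u, hu⟩ := hBint
    have hu' : -u ∈ interior B := by
      rw [hintsym]; exact Set.neg_mem_neg.mpr hu
    have := hBconv.interior hu hu' (by norm_num : (0:ℝ) ≤ 2⁻¹)
      (by norm_num : (0:ℝ) ≤ 2⁻¹) (by norm_num)
    simpa using this
  have h2B : (2:ℝ) • B = B + B := by
    have := hBconv.add_smul (zero_le_one (α := ℝ)) (zero_le_one (α := ℝ))
    norm_num at this
    exact this
  -- U, the half-interior
  set U : Set (EuclideanSpace ℝ (Fin n)) := (2⁻¹ : ℝ) • interior B with hU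
  have hUopen : IsOpen U := isOpen_interior.smul₀ (by norm_num)
  have hUne : U.Nonempty := ⟨_, Set.smul_mem_smul_set h0B⟩
  have hUU : U + U = interior B := by
    have := (hBconv.interior).add_smul (by norm_num : (0:ℝ) ≤ 2⁻¹)
      (by norm_num : (0:ℝ) ≤ 2⁻¹)
    rw [hU, ← this]
    norm_num
  have hUneg : -U = U := by
    rw [hU, ← Set.smul_set_neg, ← hintsym]
  have hUsub : U ⊆ (2⁻¹ : ℝ) • B := Set.smul_set_mono interior_subset
  -- the enlarged body S = Λ ∩ 2B
  set S : Set (EuclideanSpace ℝ (Fin n)) := Λ ∩ (2:ℝ) • B with hS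
  have hSbdd : Bornology.IsBounded ((2:ℝ) • B) := by
    exact hBbdd.smul₀ (2:ℝ)
  have hSfin : S.Finite := by
    have : DiscreteTopology (Λ : Set (EuclideanSpace ℝ (Fin n))) := by
      rw [hΛL]; exact hdisc
    have := Metric.finite_isBounded_inter_isClosed (K := (2:ℝ) • B) (s := Λ) DiscreteTopology.isDiscrete hSbdd hclosed
    exact this.subset (by rw [hS]; exact fun x hx => ⟨hx.2, hx.1⟩)
  -- A + A ⊆ S
  have hAS : A + A ⊆ S := by
    rintro z ⟨a₁, ha₁, a₂, ha₂, rfl⟩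
    rw [hA, hΛL] at ha₁ ha₂
    constructor
    · rw [hΛL]; exact L.add_mem ha₁.1 ha₂.1
    · rw [h2B]; exact ⟨a₁, ha₁.2, a₂, ha₂.2, rfl⟩
  -- choose a maximal separated subset X of S
  set P : Finset (EuclideanSpace ℝ (Fin n)) → Prop :=
    fun X => (↑X : Set (EuclideanSpace ℝ (Fin n))) ⊆ S ∧ ∀ x ∈ X, ∀ y ∈ X, x ≠ y → x - y ∉ interior B with hP
  have hPempty : P ∅ := ⟨by simp, by simp⟩
  obtain ⟨X, hXmem, hXmax⟩ :=
    Finset.exists_max_image ((hSfin.toFinset.powerset).filter P) Finset.card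
      ⟨∅, Finset.mem_filter.mpr ⟨Finset.empty_mem_powerset _, hPempty⟩⟩
  rw [Finset.mem_filter, Finset.mem_powerset] at hXmem
  obtain ⟨hXsub, hXS, hXsep⟩ := hXmem
  -- maximality: every z in S is within interior B of some x in X
  have hcover : ∀ z ∈ S, ∃ x ∈ X, z - x ∈ interior B := by
    intro z hz
    by_cases hzX : z ∈ X
    · exact ⟨z, hzX, by simpa using h0B⟩
    · by_contra hcon
      push_neg at hcon
      have hPins : P (insert z X) := by
        refine ⟨?_, ?_⟩
        · intro w hw
          rcases Finset.mem_insert.mp hw with hwz | hw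
          · rw [hwz]; exact hz
          · exact hXS hw
        · intro x hx y hy hxy hmem
          rcases Finset.mem_insert.mp hx with hxz | hx <;>
            rcases Finset.mem_insert.mp hy with hyz | hy
          · exact hxy (hxz.trans hyz.symm)
          · exact hcon y hy (by rw [← hxz]; exact hmem)
          · refine hcon x hx ?_
            rw [hintsym, Set.mem_neg, neg_sub]
            rw [hyz] at hmem
            exact hmem
          · exact hXsep x hx y hy hxy hmem
      have hins_mem : insert z X ∈ (hSfin.toFinset.powerset).filter P := by
        rw [Finset.mem_filter, Finset.mem_powerset]
        refine ⟨?_, hPins⟩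
        intro w hw
        rcases Finset.mem_insert.mp hw with rfl | hw
        · exact hSfin.mem_toFinset.mpr hz
        · exact hXsub hw
      have := hXmax _ hins_mem
      rw [Finset.card_insert_of_notMem hzX] at this
      omega
  -- volume bound : |X| ≤ 5^n
  have hXcard : X.card ≤ 5 ^ n := by
    -- translates x + U, x ∈ X, are disjoint and contained in (5/2) • B
    have hdisj : (↑X : Set (EuclideanSpace ℝ (Fin n))).PairwiseDisjoint (fun x => x +ᵥ U) := by
      intro x hx y hy hxy
      rw [Function.onFun, Set.disjoint_left]
      intro w hwx hwy
      obtain ⟨u, hu, rfl⟩ := hwx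
      obtain ⟨v, hv, hvu⟩ := hwy
      have : x - y ∈ U + U := by
        have h1 : y + v = x + u := hvu
        have hxy' : x - y = v + -u := by
          have h2 : x = y + v - u := eq_sub_of_add_eq h1.symm
          rw [sub_eq_iff_eq_add, h2]
          abel
        rw [hxy']
        exact ⟨v, hv, -u, by rw [← hUneg]; exact Set.neg_mem_neg.mpr hu, rfl⟩
      rw [hUU] at this
      exact hXsep x (by simpa using hx) y (by simpa using hy) hxy this
    have hsubbig : ∀ x ∈ X, x +ᵥ U ⊆ (5/2 : ℝ) • B := by
      intro x hx w hw
      obtain ⟨u, hu, rfl⟩ := hw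
      have hxS : x ∈ S := hXS (by simpa using hx)
      have h52 : (5/2 : ℝ) • B = (2:ℝ) • B + (2⁻¹:ℝ) • B := by
        have := hBconv.add_smul (by norm_num : (0:ℝ) ≤ 2) (by norm_num : (0:ℝ) ≤ 2⁻¹)
        norm_num at this
        convert this using 2
        norm_num
      rw [h52]
      exact ⟨x, hxS.2, u, hUsub hu, rfl⟩
    -- measure computation
    have hmeas : ∀ x ∈ X, MeasurableSet (x +ᵥ U) := by
      intro x _
      exact (hUopen.vadd x).measurableSet
    have hunion : volume (⋃ x ∈ X, x +ᵥ U) = ∑ x ∈ X, volume (x +ᵥ U) :=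
      measure_biUnion_finset hdisj hmeas
    have hvadd : ∀ x : (EuclideanSpace ℝ (Fin n)), volume (x +ᵥ U) = volume U := fun x =>
      measure_vadd (μ := volume) x U
    have hle : (X.card : ENNReal) * volume U ≤ volume ((5/2 : ℝ) • B) := by
      calc (X.card : ENNReal) * volume U = ∑ _x ∈ X, volume U := by
            rw [Finset.sum_const, nsmul_eq_mul]
        _ = volume (⋃ x ∈ X, x +ᵥ U) := by
            rw [hunion]; exact (Finset.sum_congr rfl fun x _ => (hvadd x).symm)
        _ ≤ volume ((5/2 : ℝ) • B) := by
            refine measure_mono ?_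
            exact Set.iUnion₂_subset hsubbig
    have hμU : volume U = ENNReal.ofReal ((2⁻¹:ℝ) ^ n) * volume B := by
      rw [hU, Measure.addHaar_smul_of_nonneg volume (by norm_num : (0:ℝ) ≤ 2⁻¹),
        finrank_euclideanSpace_fin]
      congr 1
      exact measure_interior_of_null_frontier (hBconv.addHaar_frontier volume)
    have hμ5B : volume ((5/2 : ℝ) • B) = ENNReal.ofReal ((5/2:ℝ) ^ n) * volume B := by
      rw [Measure.addHaar_smul_of_nonneg volume (by norm_num : (0:ℝ) ≤ 5/2),
        finrank_euclideanSpace_fin]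
    have hμBpos : volume B ≠ 0 := by
      intro h0
      have : volume (interior B) = 0 :=
        le_antisymm (h0 ▸ measure_mono interior_subset) zero_le
      exact (isOpen_interior.measure_ne_zero volume hBint) this
    have hμBtop : volume B ≠ ⊤ := hBbdd.measure_lt_top.ne
    rw [hμU, hμ5B, ← mul_assoc] at hle
    have hle2 : (X.card : ENNReal) * ENNReal.ofReal ((2⁻¹:ℝ) ^ n) ≤
        ENNReal.ofReal ((5/2:ℝ) ^ n) :=
      (ENNReal.mul_le_mul_iff_left hμBpos hμBtop).mp hle
    have h5 : ENNReal.ofReal ((5/2:ℝ) ^ n) =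
        (5 ^ n : ℕ) * ENNReal.ofReal ((2⁻¹:ℝ) ^ n) := by
      rw [← ENNReal.ofReal_natCast, ← ENNReal.ofReal_mul (by positivity)]
      congr 1
      push_cast
      rw [← mul_pow]
      norm_num
    rw [h5] at hle2
    have hfrac0 : ENNReal.ofReal ((2⁻¹:ℝ) ^ n) ≠ 0 := by
      rw [ne_eq, ENNReal.ofReal_eq_zero, not_le]
      exact (by positivity : (0:ℝ) < 2⁻¹ ^ n)
    have hfractop : ENNReal.ofReal ((2⁻¹:ℝ) ^ n) ≠ ⊤ := ENNReal.ofReal_ne_top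
    have := (ENNReal.mul_le_mul_iff_left hfrac0 hfractop).mp hle2
    exact_mod_cast this
  -- covering bound: A + A ⊆ ⋃_{x ∈ X} (x + A)
  set AF : Finset (EuclideanSpace ℝ (Fin n)) := hfin.toFinset with hAF
  set T : Finset (EuclideanSpace ℝ (Fin n)) := X.biUnion (fun x => AF.image (x + ·)) with hT
  have hAAT : A + A ⊆ (↑T : Set (EuclideanSpace ℝ (Fin n))) := by
    intro z hz
    have hzS : z ∈ S := hAS hz
    obtain ⟨x, hx, hzx⟩ := hcover z hzS
    have hzxA : z - x ∈ A := by
      rw [hA]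
      constructor
      · rw [hΛL]
        have hzΛ : z ∈ L := by rw [← SetLike.mem_coe, ← hΛL]; exact hzS.1
        have hxΛ : x ∈ L := by
          rw [← SetLike.mem_coe, ← hΛL]
          exact (hXS (by simpa using hx)).1
        exact L.sub_mem hzΛ hxΛ
      · exact interior_subset hzx
    rw [hT]
    simp only [Finset.coe_biUnion, Set.mem_iUnion, Finset.coe_image, Set.mem_image]
    exact ⟨x, by simpa using hx, z - x, by simp [hAF, hfin.mem_toFinset, hzxA], by abel⟩
  have hTcard : T.card ≤ 5 ^ n * A.ncard := by
    calc T.card ≤ ∑ x ∈ X, (AF.image (x + ·)).card := Finset.card_biUnion_le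
      _ ≤ ∑ _x ∈ X, AF.card := Finset.sum_le_sum fun x _ => Finset.card_image_le
      _ = X.card * AF.card := by rw [Finset.sum_const, smul_eq_mul]
      _ ≤ 5 ^ n * AF.card := Nat.mul_le_mul_right _ hXcard
      _ = 5 ^ n * A.ncard := by rw [Set.ncard_eq_toFinset_card A hfin]
  calc (A + A).ncard ≤ (↑T : Set (EuclideanSpace ℝ (Fin n))).ncard := Set.ncard_le_ncard hAAT T.finite_toSet
    _ = T.card := Set.ncard_coe_finset T
    _ ≤ 5 ^ n * A.ncard := hTcard
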